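/- Suppose M = diag(A₁, I_{n₂}), N = diag(I_{n₁}, A₂) with σ(A₁) ⊂ 𝔻 and σ(A₂) ⊂ 𝔻, C = [[C₁₁, C₁₂],[C₂₁, C₂₂]], and suppose that for every λ in the open unit disc, rank [M − λN; C₂] = n and rank [λM − N; C₁] = n, where C₁ = [C₁₁ C₁₂] and C₂ = [C₂₁ C₂₂]. Then for every λ ∈ ℂ, ker [M − λN; C] = {0} and ker [λM − N; C] = {0}; in particular the triple (C, M, N) is observable: ∩_{λ : det(M−λN)≠0} ker C(M − λN)⁻¹ = {0}. -/

import Mathlib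

open Matrix Polynomial

section Stmt12Aux

variable {k : Type*} [Fintype k] [DecidableEq k]

lemma stmt12_unit_mulVec_eq_zero {B : Matrix k k ℂ} (h : IsUnit B) {v : k → ℂ}
    (hv : B *ᵥ v = 0) : v = 0 :=
  Matrix.mulVec_injective_iff_isUnit.mpr h (by rw [hv, Matrix.mulVec_zero])

lemma stmt12_mem_spectrum_of_eigen {A : Matrix k k ℂ} {μ : ℂ} {v : k → ℂ}
    (hv : v ≠ 0) (h : A *ᵥ v = μ • v) : μ ∈ spectrum ℂ A := by
  rw [spectrum.mem_iff]
  intro hu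
  refine hv (stmt12_unit_mulVec_eq_zero hu ?_)
  rw [Algebra.algebraMap_eq_smul_one, Matrix.sub_mulVec, Matrix.smul_mulVec,
    Matrix.one_mulVec, h, sub_self]

lemma stmt12_isUnit_smul_one_sub {A : Matrix k k ℂ} {μ : ℂ}
    (h : μ ∉ spectrum ℂ A) : IsUnit (μ • (1 : Matrix k k ℂ) - A) := by
  rw [spectrum.notMem_iff, Algebra.algebraMap_eq_smul_one] at h
  exact h

lemma stmt12_eq_zero_of_rank_mulVec {m : Type*} [Fintype m]
    (A : Matrix m k ℂ) (h : A.rank = Fintype.card k) {v : k → ℂ}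
    (hv : A *ᵥ v = 0) : v = 0 := by
  have h2 := LinearMap.finrank_range_add_finrank_ker A.mulVecLin
  rw [Module.finrank_fintype_fun_eq_card] at h2
  have h' : Module.finrank ℂ (LinearMap.range A.mulVecLin) = Fintype.card k := h
  have hker : Module.finrank ℂ (LinearMap.ker A.mulVecLin) = 0 := by omega
  have hbot : LinearMap.ker A.mulVecLin = ⊥ := Submodule.finrank_eq_zero.mp hker
  have hmem : v ∈ LinearMap.ker A.mulVecLin := by
    simp only [LinearMap.mem_ker, Matrix.mulVecLin_apply]
    exact hv
  rw [hbot, Submodule.mem_bot] at hmem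
  exact hmem

end Stmt12Aux

/-- If `σ(A₁), σ(A₂) ⊂ 𝔻` and the rank conditions `rank [M - λN; C₂] = n`,
`rank [λM - N; C₁] = n` hold for all `λ ∈ 𝔻`, then `ker [M - λN; C] = {0}` and
`ker [λM - N; C] = {0}` for all `λ ∈ ℂ`, and the triple `(C, M, N)` is observable. -/
theorem stmt12 {n₁ n₂ p q : ℕ}
    (A₁ : Matrix (Fin n₁) (Fin n₁) ℂ) (A₂ : Matrix (Fin n₂) (Fin n₂) ℂ)
    (hA₁ : ∀ z ∈ spectrum ℂ A₁, ‖z‖ < 1) (hA₂ : ∀ z ∈ spectrum ℂ A₂, ‖z‖ < 1)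
    (C : Matrix (Fin p ⊕ Fin q) (Fin n₁ ⊕ Fin n₂) ℂ)
    (M N : Matrix (Fin n₁ ⊕ Fin n₂) (Fin n₁ ⊕ Fin n₂) ℂ)
    (hM : M = Matrix.fromBlocks A₁ 0 0 (1 : Matrix (Fin n₂) (Fin n₂) ℂ))
    (hN : N = Matrix.fromBlocks (1 : Matrix (Fin n₁) (Fin n₁) ℂ) 0 0 A₂)
    (hrank2 : ∀ l ∈ Metric.ball (0 : ℂ) 1,
      (Matrix.fromRows (M - l • N)
        (C.submatrix (Sum.inr : Fin q → Fin p ⊕ Fin q) id)).rank = n₁ + n₂)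
    (hrank1 : ∀ l ∈ Metric.ball (0 : ℂ) 1,
      (Matrix.fromRows (l • M - N)
        (C.submatrix (Sum.inl : Fin p → Fin p ⊕ Fin q) id)).rank = n₁ + n₂) :
    (∀ l : ℂ, ∀ v : Fin n₁ ⊕ Fin n₂ → ℂ,
      (M - l • N) *ᵥ v = 0 → C *ᵥ v = 0 → v = 0) ∧
    (∀ l : ℂ, ∀ v : Fin n₁ ⊕ Fin n₂ → ℂ,
      (l • M - N) *ᵥ v = 0 → C *ᵥ v = 0 → v = 0) ∧
    (∀ v : Fin n₁ ⊕ Fin n₂ → ℂ,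
      (∀ l : ℂ, IsUnit (M - l • N).det → (C * (M - l • N)⁻¹) *ᵥ v = 0) → v = 0) := by
  classical
  -- block decompositions of the pencils
  have hMN : ∀ l : ℂ, M - l • N = fromBlocks (A₁ - l • 1) 0 0 (1 - l • A₂) := by
    intro l
    rw [hM, hN]
    ext (i | i) (j | j) <;> simp
  have hMN' : ∀ l : ℂ, l • M - N = fromBlocks (l • A₁ - 1) 0 0 (l • 1 - A₂) := by
    intro l
    rw [hM, hN]
    ext (i | i) (j | j) <;> simp
  have hC1 : ∀ v : Fin n₁ ⊕ Fin n₂ → ℂ,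
      (C.submatrix (Sum.inl : Fin p → Fin p ⊕ Fin q) id) *ᵥ v
        = fun i => (C *ᵥ v) (Sum.inl i) := fun _ => rfl
  have hC2 : ∀ v : Fin n₁ ⊕ Fin n₂ → ℂ,
      (C.submatrix (Sum.inr : Fin q → Fin p ⊕ Fin q) id) *ᵥ v
        = fun i => (C *ᵥ v) (Sum.inr i) := fun _ => rfl
  have hcard : Fintype.card (Fin n₁ ⊕ Fin n₂) = n₁ + n₂ := by simp
  -- Part 1
  have part1 : ∀ l : ℂ, ∀ v : Fin n₁ ⊕ Fin n₂ → ℂ,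
      (M - l • N) *ᵥ v = 0 → C *ᵥ v = 0 → v = 0 := by
    intro l v h1 h2
    by_cases hl : l ∈ Metric.ball (0 : ℂ) 1
    · refine stmt12_eq_zero_of_rank_mulVec (Matrix.fromRows (M - l • N) (C.submatrix (Sum.inr : Fin q → Fin p ⊕ Fin q) id)) (by rw [hrank2 l hl, hcard]) ?_
      rw [Matrix.fromRows_mulVec, h1, hC2, h2]
      ext (i | i) <;> simp
    · rw [Metric.mem_ball, dist_zero_right, not_lt] at hl
      rw [hMN l, Matrix.fromBlocks_mulVec] at h1
      have h1a : (A₁ - l • 1) *ᵥ (v ∘ Sum.inl) = 0 := by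
        funext i
        have := congrFun h1 (Sum.inl i)
        simpa using this
      have h1b : (1 - l • A₂) *ᵥ (v ∘ Sum.inr) = 0 := by
        funext i
        have := congrFun h1 (Sum.inr i)
        simpa using this
      have hlA : IsUnit (l • (1 : Matrix (Fin n₁) (Fin n₁) ℂ) - A₁) := by
        refine stmt12_isUnit_smul_one_sub fun hmem => ?_
        exact absurd (hA₁ l hmem) (not_lt.mpr hl)
      have hv1 : v ∘ Sum.inl = 0 := by
        refine stmt12_unit_mulVec_eq_zero hlA ?_
        have he : (l • (1 : Matrix (Fin n₁) (Fin n₁) ℂ) - A₁) = -(A₁ - l • 1) := by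
          rw [neg_sub]
        rw [he, Matrix.neg_mulVec, h1a, neg_zero]
      by_cases hv2 : v ∘ Sum.inr = 0
      · funext i
        cases i with
        | inl i => exact congrFun hv1 i
        | inr i => exact congrFun hv2 i
      · have hl0 : l ≠ 0 := by
          intro h
          rw [h, norm_zero] at hl
          linarith
        have hsub : (v ∘ Sum.inr) - l • (A₂ *ᵥ (v ∘ Sum.inr)) = 0 := by
          have h1b' := h1b
          rw [Matrix.sub_mulVec, Matrix.one_mulVec, Matrix.smul_mulVec] at h1b'
          exact h1b'
        have heq : l • (A₂ *ᵥ (v ∘ Sum.inr)) = v ∘ Sum.inr := (sub_eq_zero.mp hsub).symm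
        have heig : A₂ *ᵥ (v ∘ Sum.inr) = l⁻¹ • (v ∘ Sum.inr) := by
          conv_rhs => rw [← heq]
          rw [smul_smul, inv_mul_cancel₀ hl0, one_smul]
        have hmem : l⁻¹ ∈ spectrum ℂ A₂ := stmt12_mem_spectrum_of_eigen hv2 heig
        have hball : l⁻¹ ∈ Metric.ball (0 : ℂ) 1 := by
          rw [Metric.mem_ball, dist_zero_right]
          exact hA₂ _ hmem
        refine stmt12_eq_zero_of_rank_mulVec (Matrix.fromRows (l⁻¹ • M - N) (C.submatrix (Sum.inl : Fin p → Fin p ⊕ Fin q) id)) (by rw [hrank1 _ hball, hcard]) ?_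
        have hvelim : v = Sum.elim (0 : Fin n₁ → ℂ) (v ∘ Sum.inr) := by
          funext i
          cases i with
          | inl i => exact congrFun hv1 i
          | inr i => rfl
        have e2 : (l⁻¹ • (1 : Matrix (Fin n₂) (Fin n₂) ℂ) - A₂) *ᵥ (v ∘ Sum.inr) = 0 := by
          rw [Matrix.sub_mulVec, Matrix.smul_mulVec, Matrix.one_mulVec, heig, sub_self]
        have e1 : (l⁻¹ • M - N) *ᵥ v = 0 := by
          rw [hMN' l⁻¹, hvelim, Matrix.fromBlocks_mulVec]
          funext i
          cases i with
          | inl i => simp [Sum.elim_comp_inl, Sum.elim_comp_inr]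
          | inr i => simp [Sum.elim_comp_inl, Sum.elim_comp_inr, e2]
        rw [Matrix.fromRows_mulVec, e1, hC1, h2]
        ext (i | i) <;> simp
  -- Part 2
  have part2 : ∀ l : ℂ, ∀ v : Fin n₁ ⊕ Fin n₂ → ℂ,
      (l • M - N) *ᵥ v = 0 → C *ᵥ v = 0 → v = 0 := by
    intro l v h1 h2
    by_cases hl : l ∈ Metric.ball (0 : ℂ) 1
    · refine stmt12_eq_zero_of_rank_mulVec (Matrix.fromRows (l • M - N) (C.submatrix (Sum.inl : Fin p → Fin p ⊕ Fin q) id)) (by rw [hrank1 l hl, hcard]) ?_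
      rw [Matrix.fromRows_mulVec, h1, hC1, h2]
      ext (i | i) <;> simp
    · rw [Metric.mem_ball, dist_zero_right, not_lt] at hl
      rw [hMN' l, Matrix.fromBlocks_mulVec] at h1
      have h1a : (l • A₁ - 1) *ᵥ (v ∘ Sum.inl) = 0 := by
        funext i
        have := congrFun h1 (Sum.inl i)
        simpa using this
      have h1b : (l • 1 - A₂) *ᵥ (v ∘ Sum.inr) = 0 := by
        funext i
        have := congrFun h1 (Sum.inr i)
        simpa using this
      have hlA : IsUnit (l • (1 : Matrix (Fin n₂) (Fin n₂) ℂ) - A₂) := by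
        refine stmt12_isUnit_smul_one_sub fun hmem => ?_
        exact absurd (hA₂ l hmem) (not_lt.mpr hl)
      have hv2 : v ∘ Sum.inr = 0 := stmt12_unit_mulVec_eq_zero hlA h1b
      by_cases hv1 : v ∘ Sum.inl = 0
      · funext i
        cases i with
        | inl i => exact congrFun hv1 i
        | inr i => exact congrFun hv2 i
      · have hl0 : l ≠ 0 := by
          intro h
          rw [h, norm_zero] at hl
          linarith
        have hsub : l • (A₁ *ᵥ (v ∘ Sum.inl)) - (v ∘ Sum.inl) = 0 := by
          have h1a' := h1a
          rw [Matrix.sub_mulVec, Matrix.smul_mulVec, Matrix.one_mulVec] at h1a'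
          exact h1a'
        have heq : l • (A₁ *ᵥ (v ∘ Sum.inl)) = v ∘ Sum.inl := sub_eq_zero.mp hsub
        have heig : A₁ *ᵥ (v ∘ Sum.inl) = l⁻¹ • (v ∘ Sum.inl) := by
          conv_rhs => rw [← heq]
          rw [smul_smul, inv_mul_cancel₀ hl0, one_smul]
        have hmem : l⁻¹ ∈ spectrum ℂ A₁ := stmt12_mem_spectrum_of_eigen hv1 heig
        have hball : l⁻¹ ∈ Metric.ball (0 : ℂ) 1 := by
          rw [Metric.mem_ball, dist_zero_right]
          exact hA₁ _ hmem
        refine stmt12_eq_zero_of_rank_mulVec (Matrix.fromRows (M - l⁻¹ • N) (C.submatrix (Sum.inr : Fin q → Fin p ⊕ Fin q) id)) (by rw [hrank2 _ hball, hcard]) ?_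
        have hvelim : v = Sum.elim (v ∘ Sum.inl) (0 : Fin n₂ → ℂ) := by
          funext i
          cases i with
          | inl i => rfl
          | inr i => exact congrFun hv2 i
        have e2 : (A₁ - l⁻¹ • (1 : Matrix (Fin n₁) (Fin n₁) ℂ)) *ᵥ (v ∘ Sum.inl) = 0 := by
          rw [Matrix.sub_mulVec, Matrix.smul_mulVec, Matrix.one_mulVec, heig, sub_self]
        have e1 : (M - l⁻¹ • N) *ᵥ v = 0 := by
          rw [hMN l⁻¹, hvelim, Matrix.fromBlocks_mulVec]
          funext i
          cases i with
          | inl i => simp [Sum.elim_comp_inl, Sum.elim_comp_inr, e2]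
          | inr i => simp [Sum.elim_comp_inl, Sum.elim_comp_inr]
        rw [Matrix.fromRows_mulVec, e1, hC2, h2]
        ext (i | i) <;> simp
  refine ⟨part1, part2, ?_⟩
  -- Part 3: observability
  -- polynomial pencil
  set Q : Matrix (Fin n₁ ⊕ Fin n₂) (Fin n₁ ⊕ Fin n₂) ℂ[X] :=
    M.map Polynomial.C - (X : ℂ[X]) • N.map Polynomial.C with hQ
  have hQeval : ∀ l : ℂ, Q.map (eval l) = M - l • N := by
    intro l
    ext i j
    simp [hQ, Matrix.map_apply]
    ring
  have hQblocks : Q = fromBlocks (A₁.map Polynomial.C - (X : ℂ[X]) • 1) 0 0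
      (1 - (X : ℂ[X]) • A₂.map Polynomial.C) := by
    rw [hQ, hM, hN]
    ext (i | i) (j | j) <;>
      simp [Matrix.map_apply, Matrix.one_apply, apply_ite Polynomial.C] <;>
      split_ifs <;> simp
  have hdetQ : Q.det ≠ 0 := by
    rw [hQblocks, Matrix.det_fromBlocks_zero₂₁]
    refine mul_ne_zero ?_ ?_
    · intro h
      have h2 := congrArg (Polynomial.eval 2) h
      rw [Polynomial.eval_zero, ← Polynomial.coe_evalRingHom, RingHom.map_det] at h2
      have hmap : (Polynomial.evalRingHom (2 : ℂ)).mapMatrix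
          (A₁.map Polynomial.C - (X : ℂ[X]) • 1) = A₁ - (2 : ℂ) • 1 := by
        ext i j
        by_cases hij : i = j <;> simp [Matrix.map_apply, Matrix.one_apply, hij]
      rw [hmap] at h2
      have hu : IsUnit ((2 : ℂ) • (1 : Matrix (Fin n₁) (Fin n₁) ℂ) - A₁) := by
        refine stmt12_isUnit_smul_one_sub fun hmem => ?_
        have := hA₁ 2 hmem
        norm_num at this
      have hdu : ((2 : ℂ) • (1 : Matrix (Fin n₁) (Fin n₁) ℂ) - A₁).det ≠ 0 :=
        ((Matrix.isUnit_iff_isUnit_det _).mp hu).ne_zero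
      have hneg : (A₁ - (2 : ℂ) • 1) = -((2 : ℂ) • (1 : Matrix (Fin n₁) (Fin n₁) ℂ) - A₁) := by
        rw [neg_sub]
      rw [hneg, Matrix.det_neg] at h2
      exact hdu (by
        rcases mul_eq_zero.mp h2 with h | h
        · exact absurd h (pow_ne_zero _ (by norm_num))
        · exact h)
    · intro h
      have h2 := congrArg (Polynomial.eval 0) h
      rw [Polynomial.eval_zero, ← Polynomial.coe_evalRingHom, RingHom.map_det] at h2
      have hmap : (Polynomial.evalRingHom (0 : ℂ)).mapMatrix
          ((1 : Matrix (Fin n₂) (Fin n₂) ℂ[X]) - (X : ℂ[X]) • A₂.map Polynomial.C)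
          = (1 : Matrix (Fin n₂) (Fin n₂) ℂ) := by
        ext i j
        by_cases hij : i = j <;> simp [Matrix.map_apply, Matrix.one_apply, hij]
      rw [hmap, Matrix.det_one] at h2
      exact one_ne_zero h2
  have hroot : ∀ l : ℂ, ¬ IsUnit (M - l • N).det → Q.det.IsRoot l := by
    intro l h
    have he : Polynomial.eval l Q.det = (M - l • N).det := by
      have hd := (Polynomial.evalRingHom l).map_det Q
      rw [RingHom.mapMatrix_apply, Polynomial.coe_evalRingHom] at hd
      rw [hd, hQeval]
    rw [Polynomial.IsRoot, he]
    by_contra h0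
    exact h (isUnit_iff_ne_zero.mpr h0)
  -- extension lemma: vanishing off a finite set extends to all unit points
  have extend : ∀ (E : Set ℂ), E.Finite → ∀ x : Fin n₁ ⊕ Fin n₂ → ℂ,
      (∀ l : ℂ, IsUnit (M - l • N).det → l ∉ E → (C * (M - l • N)⁻¹) *ᵥ x = 0) →
      ∀ l : ℂ, IsUnit (M - l • N).det → (C * (M - l • N)⁻¹) *ᵥ x = 0 := by
    intro E hE x hx
    set g : Fin p ⊕ Fin q → ℂ[X] :=
      (C.map Polynomial.C * Q.adjugate) *ᵥ (fun j => Polynomial.C (x j)) with hg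
    have hmat : ∀ l : ℂ, (C.map Polynomial.C * Q.adjugate).map (eval l)
        = C * (M - l • N).adjugate := by
      intro l
      rw [← Polynomial.coe_evalRingHom, Matrix.map_mul]
      congr 1
      · ext i j
        simp [Matrix.map_apply]
      · have had := (Polynomial.evalRingHom l).map_adjugate Q
        rw [RingHom.mapMatrix_apply, RingHom.mapMatrix_apply] at had
        rw [had, Polynomial.coe_evalRingHom, hQeval]
    have hgeval : ∀ (l : ℂ) (i : Fin p ⊕ Fin q),
        Polynomial.eval l (g i) = ((C * (M - l • N).adjugate) *ᵥ x) i := by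
      intro l i
      rw [← hmat l]
      simp only [hg, Matrix.mulVec, dotProduct, Matrix.map_apply]
      rw [Polynomial.eval_finset_sum]
      congr 1
      funext j
      rw [Polynomial.eval_mul, Polynomial.eval_C]
    have hgzero : ∀ i, g i = 0 := by
      intro i
      apply Polynomial.eq_zero_of_infinite_isRoot
      have hfin : ({l : ℂ | Q.det.IsRoot l} ∪ E).Finite :=
        (Polynomial.finite_setOf_isRoot hdetQ).union hE
      refine (hfin.infinite_compl).mono ?_
      intro l hl
      simp only [Set.mem_compl_iff, Set.mem_union, not_or, Set.mem_setOf_eq] at hl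
      have hu : IsUnit (M - l • N).det := by
        by_contra h
        exact hl.1 (hroot l h)
      have h0 := hx l hu hl.2
      show (g i).IsRoot l
      rw [Polynomial.IsRoot, hgeval]
      have hadj : (M - l • N).det • (M - l • N)⁻¹ = (M - l • N).adjugate := by
        rw [Matrix.inv_def, smul_smul, Ring.mul_inverse_cancel _ hu, one_smul]
      have hc : (C * (M - l • N).adjugate) *ᵥ x
          = (M - l • N).det • ((C * (M - l • N)⁻¹) *ᵥ x) := by
        rw [← hadj, Matrix.mul_smul, Matrix.smul_mulVec]
      rw [hc, h0, smul_zero]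
      rfl
    intro l hu
    have hall : (C * (M - l • N).adjugate) *ᵥ x = 0 := by
      funext i
      rw [← hgeval l i, hgzero i]
      simp
    have hinv : (C * (M - l • N)⁻¹) *ᵥ x
        = Ring.inverse (M - l • N).det • ((C * (M - l • N).adjugate) *ᵥ x) := by
      rw [Matrix.inv_def, Matrix.mul_smul, Matrix.smul_mulVec]
    rw [hinv, hall, smul_zero]
  -- the observability subspace
  set P : (Fin n₁ ⊕ Fin n₂ → ℂ) → Prop :=
    fun x => ∀ l : ℂ, IsUnit (M - l • N).det → (C * (M - l • N)⁻¹) *ᵥ x = 0 with hP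
  set V : Submodule ℂ (Fin n₁ ⊕ Fin n₂ → ℂ) :=
    { carrier := {x | P x}
      add_mem' := by
        intro a b ha hb l hu
        rw [Matrix.mulVec_add, ha l hu, hb l hu, add_zero]
      zero_mem' := by
        intro l hu
        rw [Matrix.mulVec_zero]
      smul_mem' := by
        intro c a ha l hu
        rw [Matrix.mulVec_smul, ha l hu, smul_zero] } with hV
  have hmemV : ∀ x : Fin n₁ ⊕ Fin n₂ → ℂ, x ∈ V ↔ P x := fun x => Iff.rfl
  obtain ⟨l₀, hl₀⟩ : ∃ l : ℂ, IsUnit (M - l • N).det := by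
    obtain ⟨l, hl⟩ := ((Polynomial.finite_setOf_isRoot hdetQ).infinite_compl).nonempty
    refine ⟨l, ?_⟩
    by_contra h
    exact hl (hroot l h)
  -- V is invariant under N * (M - l₀ N)⁻¹
  have hinvar : ∀ x ∈ V, (N * (M - l₀ • N)⁻¹) *ᵥ x ∈ V := by
    intro x hx
    rw [hmemV]
    refine extend {l₀} (Set.finite_singleton l₀) _ ?_
    intro l hu hne
    have hne' : l - l₀ ≠ 0 := sub_ne_zero.mpr (by simpa using hne)
    have key : (M - l₀ • N) - (M - l • N) = (l - l₀) • N := by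
      rw [sub_sub_sub_cancel_left, ← sub_smul]
    have h2 : (M - l • N)⁻¹ - (M - l₀ • N)⁻¹
        = (M - l • N)⁻¹ * ((M - l₀ • N) - (M - l • N)) * (M - l₀ • N)⁻¹ := by
      rw [Matrix.mul_sub, Matrix.sub_mul]
      rw [Matrix.mul_nonsing_inv_cancel_right _ _ hl₀,
        Matrix.nonsing_inv_mul _ hu, Matrix.one_mul]
    have hres : (M - l • N)⁻¹ * (N * (M - l₀ • N)⁻¹)
        = (l - l₀)⁻¹ • ((M - l • N)⁻¹ - (M - l₀ • N)⁻¹) := by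
      rw [h2, key, Matrix.mul_smul, Matrix.smul_mul, smul_smul,
        inv_mul_cancel₀ hne', one_smul, Matrix.mul_assoc]
    calc (C * (M - l • N)⁻¹) *ᵥ ((N * (M - l₀ • N)⁻¹) *ᵥ x)
        = (C * (M - l • N)⁻¹ * (N * (M - l₀ • N)⁻¹)) *ᵥ x := by
          rw [Matrix.mulVec_mulVec]
      _ = ((l - l₀)⁻¹ • (C * ((M - l • N)⁻¹ - (M - l₀ • N)⁻¹))) *ᵥ x := by
          rw [Matrix.mul_assoc, hres, Matrix.mul_smul]
      _ = (l - l₀)⁻¹ • ((C * (M - l • N)⁻¹) *ᵥ x - (C * (M - l₀ • N)⁻¹) *ᵥ x) := by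
          rw [Matrix.smul_mulVec, Matrix.mul_sub, Matrix.sub_mulVec]
      _ = 0 := by
          rw [(hmemV x).mp hx l hu, (hmemV x).mp hx l₀ hl₀, sub_self, smul_zero]
  intro v hv
  by_contra hv0
  have hvV : v ∈ V := hv
  haveI : Nontrivial V :=
    ⟨⟨⟨v, hvV⟩, 0, fun h => hv0 (by simpa using congrArg Subtype.val h)⟩⟩
  let T : Module.End ℂ V := ((N * (M - l₀ • N)⁻¹).mulVecLin).restrict hinvar
  obtain ⟨α, hα⟩ := Module.End.exists_eigenvalue T
  obtain ⟨u, hu_eig⟩ := hα.exists_hasEigenvector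
  have hu_ne : (u : Fin n₁ ⊕ Fin n₂ → ℂ) ≠ 0 := by
    intro h
    exact hu_eig.2 (Subtype.ext h)
  have hTu : (N * (M - l₀ • N)⁻¹) *ᵥ (u : Fin n₁ ⊕ Fin n₂ → ℂ)
      = α • (u : Fin n₁ ⊕ Fin n₂ → ℂ) := by
    have h1 : T u = α • u := Module.End.mem_eigenspace_iff.mp hu_eig.1
    have h2 := congrArg Subtype.val h1
    simp only [T, LinearMap.restrict_coe_apply] at h2
    simpa using h2
  set w : Fin n₁ ⊕ Fin n₂ → ℂ := (M - l₀ • N)⁻¹ *ᵥ (u : Fin n₁ ⊕ Fin n₂ → ℂ) with hw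
  have hMw : (M - l₀ • N) *ᵥ w = (u : Fin n₁ ⊕ Fin n₂ → ℂ) := by
    rw [hw, Matrix.mulVec_mulVec, Matrix.mul_nonsing_inv _ hl₀, Matrix.one_mulVec]
  have hwne : w ≠ 0 := by
    intro h
    apply hu_ne
    rw [← hMw, h, Matrix.mulVec_zero]
  have hCw : C *ᵥ w = 0 := by
    have := (hmemV _).mp u.2 l₀ hl₀
    rw [← Matrix.mulVec_mulVec] at this
    exact this
  have hNw : N *ᵥ w = α • ((M - l₀ • N) *ᵥ w) := by
    rw [hMw, ← hTu, hw, Matrix.mulVec_mulVec]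
  by_cases hα0 : α = 0
  · have hNw0 : N *ᵥ w = 0 := by rw [hNw, hα0, zero_smul]
    refine hwne (part2 0 w ?_ hCw)
    rw [zero_smul, zero_sub, Matrix.neg_mulVec, hNw0, neg_zero]
  · -- α ≠ 0
    have hexp : (M - l₀ • N) *ᵥ w = M *ᵥ w - l₀ • (N *ᵥ w) := by
      rw [Matrix.sub_mulVec, Matrix.smul_mulVec]
    have hrel' : N *ᵥ w = α • (M *ᵥ w) - (α * l₀) • (N *ᵥ w) := by
      conv_lhs => rw [hNw]
      rw [hexp, smul_sub, smul_smul]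
    have hrel2 : α • (M *ᵥ w) = (1 + α * l₀) • (N *ᵥ w) := by
      have h3 := eq_sub_iff_add_eq.mp hrel'
      rw [add_smul, one_smul]
      exact h3.symm
    set β : ℂ := α⁻¹ * (1 + α * l₀) with hβ
    have hαβ : α * β = 1 + α * l₀ := by
      rw [hβ, ← mul_assoc, mul_inv_cancel₀ hα0, one_mul]
    have hz : α • ((M - β • N) *ᵥ w) = 0 := by
      rw [Matrix.sub_mulVec, Matrix.smul_mulVec, smul_sub, smul_smul, hαβ, hrel2,
        sub_self]
    have hzero : (M - β • N) *ᵥ w = 0 := by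
      rcases smul_eq_zero.mp hz with h | h
      · exact absurd h hα0
      · exact h
    exact hwne (part1 β w hzero hCw)
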